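/- arXiv:1008.3202 — 2 statements merged into one kernel-verified Lean document; each statement's English description precedes it below -/
import Mathlib

section
/- Every nonzero integer N can be written uniquely as N = ∑ ε_i F_{n_i} where each ε_i ∈ {+1, -1}, the indices n_1 > n_2 > ... are such that any two summands of the same sign differ in index by at least 4, and any two summands of opposite sign differ in index by at least 3. -/
/-- Fibonacci numbers with the convention `F 1 = 1`, `F 2 = 2`. -/
def F (n : ℕ) : ℕ := Nat.fib (n + 1)

/-- `(P, M)` is a far-difference representation of the integer `N`: the summands
`+F i` for `i ∈ P` and `-F j` for `j ∈ M` have same-sign indices differing by at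
least 4 and opposite-sign indices differing by at least 3. -/
def FarRep (P M : Finset ℕ) (N : ℤ) : Prop :=
  (∀ i ∈ P, 1 ≤ i) ∧ (∀ i ∈ M, 1 ≤ i) ∧
  (∀ i ∈ P, ∀ j ∈ P, i ≠ j → 4 ≤ |(i : ℤ) - (j : ℤ)|) ∧
  (∀ i ∈ M, ∀ j ∈ M, i ≠ j → 4 ≤ |(i : ℤ) - (j : ℤ)|) ∧
  (∀ i ∈ P, ∀ j ∈ M, 3 ≤ |(i : ℤ) - (j : ℤ)|) ∧
  N = ∑ i ∈ P, (F i : ℤ) - ∑ j ∈ M, (F j : ℤ)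

def S : ℕ → ℕ
  | 0 => 0
  | n + 1 => F (n + 1) + S (n - 3)

lemma S_zero : S 0 = 0 := by simp [S]

lemma S_succ (n : ℕ) : S (n + 1) = F (n + 1) + S (n - 3) := by rw [S]

lemma S_key : ∀ n : ℕ, F (n + 1) = S n + S (n - 2) + 1 := by
  intro n
  induction n using Nat.strong_induction_on with
  | _ n ih =>
    match n, ih with
    | 0, _ => first | (simp [S_zero, S_succ, F]; decide) | simp [S_zero, S_succ, F]
    | 1, _ => first | (simp [S_zero, S_succ, F]; decide) | simp [S_zero, S_succ, F]
    | 2, _ => first | (simp [S_zero, S_succ, F]; decide) | simp [S_zero, S_succ, F]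
    | 3, _ => first | (simp [S_zero, S_succ, F]; decide) | simp [S_zero, S_succ, F]
    | 4, _ => first | (simp [S_zero, S_succ, F]; decide) | simp [S_zero, S_succ, F]
    | (m+5), ih =>
      have h1 : F (m+5) = S (m+4) + S (m+2) + 1 := ih (m+4) (by omega)
      have h2 : F (m+4) = S (m+3) + S (m+1) + 1 := ih (m+3) (by omega)
      have hF : F (m+6) = F (m+4) + F (m+5) := Nat.fib_add_two (n := m+5)
      have h3 : S (m+5) = F (m+5) + S (m+1) := S_succ (m+4)
      show F (m+6) = S (m+5) + S (m+3) + 1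
      omega

lemma F_eq (n : ℕ) (h : 1 ≤ n) : F n = S (n - 1) + S (n - 3) + 1 := by
  obtain ⟨m, rfl⟩ : ∃ m, n = m + 1 := ⟨n - 1, by omega⟩
  exact S_key m

lemma S_lt_succ (n : ℕ) : S n < S (n + 1) := by
  have h := S_key n
  have h2 := S_succ n
  omega

lemma S_mono : Monotone S := (strictMono_nat_of_lt_succ S_lt_succ).monotone

lemma S_le_self : ∀ n : ℕ, n ≤ S n := by
  intro n
  induction n with
  | zero => simp
  | succ k ih => have := S_lt_succ k; omega

lemma S_eq (n : ℕ) (h : 1 ≤ n) : S n = F n + S (n - 4) := by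
  obtain ⟨m, rfl⟩ : ∃ m, n = m + 1 := ⟨n - 1, by omega⟩
  exact S_succ m

lemma sum_le_S (P : Finset ℕ) : ∀ n : ℕ, (∀ i ∈ P, 1 ≤ i) → (∀ i ∈ P, i ≤ n) →
    (∀ i ∈ P, ∀ j ∈ P, i ≠ j → 4 ≤ |(i : ℤ) - (j : ℤ)|) →
    (∑ i ∈ P, (F i : ℤ)) ≤ (S n : ℤ) := by
  induction P using Finset.strongInduction with
  | _ P ih =>
    intro n h1 hub hgap
    rcases P.eq_empty_or_nonempty with rfl | hne
    · simp
    · set m := P.max' hne with hm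
      have hmP : m ∈ P := P.max'_mem hne
      have hm1 : 1 ≤ m := h1 m hmP
      have hub' : ∀ i ∈ P.erase m, i ≤ m - 4 := by
        intro i hi
        have hiP := Finset.mem_of_mem_erase hi
        have hile : i ≤ m := P.le_max' i hiP
        have := hgap i hiP m hmP (Finset.ne_of_mem_erase hi)
        rcases le_abs.mp this with h' | h' <;> omega
      have hrec := ih (P.erase m) (Finset.erase_ssubset hmP) (m - 4)
        (fun i hi => h1 i (Finset.mem_of_mem_erase hi)) hub'
        (fun i hi j hj hij => hgap i (Finset.mem_of_mem_erase hi) j (Finset.mem_of_mem_erase hj) hij)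
      have hsum : (∑ i ∈ P, (F i : ℤ)) = F m + ∑ i ∈ P.erase m, (F i : ℤ) :=
        (Finset.add_sum_erase _ _ hmP).symm
      have hSm : S m = F m + S (m - 4) := S_eq m hm1
      have hmn : S m ≤ S n := S_mono (hub m hmP)
      omega

lemma farRep_swap {P M : Finset ℕ} {N : ℤ} (h : FarRep P M N) : FarRep M P (-N) := by
  obtain ⟨h1, h2, h3, h4, h5, h6⟩ := h
  exact ⟨h2, h1, h4, h3, fun i hi j hj => by rw [abs_sub_comm]; exact h5 j hj i hi,
    by rw [h6]; ring⟩

lemma lead_core {P M : Finset ℕ} {N : ℤ} (h : FarRep P M N) {n : ℕ} (hnP : n ∈ P)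
    (hub : ∀ i ∈ P ∪ M, i ≤ n) :
    (∀ j ∈ M, j ≤ n - 3) ∧ (∀ i ∈ P.erase n, i ≤ n - 4) ∧
    ((S (n-1) : ℤ) < N ∧ N ≤ (S n : ℤ)) ∧
    FarRep (P.erase n) M (N - F n) ∧
    (-(S (n-3) : ℤ) ≤ N - F n ∧ N - F n ≤ (S (n-4) : ℤ)) := by
  obtain ⟨h1, h2, h3, h4, h5, h6⟩ := h
  have hn1 : 1 ≤ n := h1 n hnP
  have hMub : ∀ j ∈ M, j ≤ n - 3 := by
    intro j hj
    have hjn : j ≤ n := hub j (Finset.mem_union_right _ hj)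
    have := h5 n hnP j hj
    rcases le_abs.mp this with h' | h' <;> omega
  have hEub : ∀ i ∈ P.erase n, i ≤ n - 4 := by
    intro i hi
    have hiP := Finset.mem_of_mem_erase hi
    have hin : i ≤ n := hub i (Finset.mem_union_left _ hiP)
    have := h3 i hiP n hnP (Finset.ne_of_mem_erase hi)
    rcases le_abs.mp this with h' | h' <;> omega
  have hMle : (∑ j ∈ M, (F j : ℤ)) ≤ (S (n-3) : ℤ) := sum_le_S M (n-3) h2 hMub h4
  have hEle : (∑ i ∈ P.erase n, (F i : ℤ)) ≤ (S (n-4) : ℤ) :=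
    sum_le_S _ (n-4) (fun i hi => h1 i (Finset.mem_of_mem_erase hi)) hEub
      (fun i hi j hj hij => h3 i (Finset.mem_of_mem_erase hi) j (Finset.mem_of_mem_erase hj) hij)
  have hMnn : (0:ℤ) ≤ ∑ j ∈ M, (F j : ℤ) := Finset.sum_nonneg (fun j _ => by positivity)
  have hEnn : (0:ℤ) ≤ ∑ i ∈ P.erase n, (F i : ℤ) := Finset.sum_nonneg (fun i _ => by positivity)
  have hPs : (∑ i ∈ P, (F i : ℤ)) = F n + ∑ i ∈ P.erase n, (F i : ℤ) :=
    (Finset.add_sum_erase _ _ hnP).symm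
  have hFeq : F n = S (n-1) + S (n-3) + 1 := F_eq n hn1
  have hSeq : S n = F n + S (n - 4) := S_eq n hn1
  refine ⟨hMub, hEub, ⟨by omega, by omega⟩, ?_, by omega, by omega⟩
  exact ⟨fun i hi => h1 i (Finset.mem_of_mem_erase hi), h2,
    fun i hi j hj hij => h3 _ (Finset.mem_of_mem_erase hi) _ (Finset.mem_of_mem_erase hj) hij, h4,
    fun i hi j hj => h5 _ (Finset.mem_of_mem_erase hi) _ hj, by rw [h6, hPs]; ring⟩

lemma lead {P M : Finset ℕ} {N : ℤ} (h : FarRep P M N) (hpos : 0 < N) :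
    ∃ n, n ∈ P ∧ (∀ i ∈ P ∪ M, i ≤ n) ∧
    (∀ j ∈ M, j ≤ n - 3) ∧ (∀ i ∈ P.erase n, i ≤ n - 4) ∧
    ((S (n-1) : ℤ) < N ∧ N ≤ (S n : ℤ)) ∧
    FarRep (P.erase n) M (N - F n) ∧
    (-(S (n-3) : ℤ) ≤ N - F n ∧ N - F n ≤ (S (n-4) : ℤ)) := by
  have hne : (P ∪ M).Nonempty := by
    rcases (P ∪ M).eq_empty_or_nonempty with he | hne
    · exfalso
      rw [Finset.union_eq_empty] at he
      obtain ⟨_, _, _, _, _, h6⟩ := h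
      rw [he.1, he.2] at h6
      simp at h6
      omega
    · exact hne
  have hub : ∀ i ∈ P ∪ M, i ≤ (P ∪ M).max' hne := fun i hi => Finset.le_max' _ i hi
  rcases Finset.mem_union.mp ((P ∪ M).max'_mem hne) with hp | hm
  · exact ⟨_, hp, hub, lead_core h hp hub⟩
  · exfalso
    have hub' : ∀ i ∈ M ∪ P, i ≤ (P ∪ M).max' hne :=
      fun i hi => hub i (Finset.mem_union.mpr (Finset.mem_union.mp hi).symm)
    have hlt := (lead_core (farRep_swap h) hm hub').2.2.1.1
    have hnn : (0:ℤ) ≤ (S ((P ∪ M).max' hne - 1) : ℤ) := by positivity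
    omega

lemma farRep_zero {P M : Finset ℕ} (h : FarRep P M 0) : P = ∅ ∧ M = ∅ := by
  rcases (P ∪ M).eq_empty_or_nonempty with he | hne
  · rw [Finset.union_eq_empty] at he; exact he
  · exfalso
    have hub : ∀ i ∈ P ∪ M, i ≤ (P ∪ M).max' hne := fun i hi => Finset.le_max' _ i hi
    have hnn : (0:ℤ) ≤ (S ((P ∪ M).max' hne - 1) : ℤ) := by positivity
    rcases Finset.mem_union.mp ((P ∪ M).max'_mem hne) with hp | hm
    · have hlt := (lead_core h hp hub).2.2.1.1
      omega
    · have hub' : ∀ i ∈ M ∪ P, i ≤ (P ∪ M).max' hne :=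
        fun i hi => hub i (Finset.mem_union.mpr (Finset.mem_union.mp hi).symm)
      have hlt := (lead_core (farRep_swap h) hm hub').2.2.1.1
      omega

lemma interval_unique {q n : ℕ} {N : ℤ} (h1 : (S (q-1) : ℤ) < N) (h2 : N ≤ (S q : ℤ))
    (h3 : (S (n-1) : ℤ) < N) (h4 : N ≤ (S n : ℤ)) : q = n := by
  by_contra hne
  rcases Nat.lt_or_ge q n with hlt | hge
  · have : S q ≤ S (n-1) := S_mono (by omega)
    omega
  · have : S n ≤ S (q-1) := S_mono (by omega)
    omega

/-- **Alpert's theorem.** Every nonzero integer has a unique far-difference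
representation. -/
theorem far_difference_representation (N : ℤ) (hN : N ≠ 0) :
    ∃! PM : Finset ℕ × Finset ℕ, FarRep PM.1 PM.2 N := by
  suffices H : ∀ k : ℕ, ∀ N : ℤ, N.natAbs ≤ k → N ≠ 0 →
      ∃! PM : Finset ℕ × Finset ℕ, FarRep PM.1 PM.2 N from H N.natAbs N le_rfl hN
  intro k
  induction k with
  | zero => intro N h hN; exfalso; omega
  | succ k ih =>
    have pos : ∀ N : ℤ, N.natAbs ≤ k + 1 → 0 < N →
        ∃! PM : Finset ℕ × Finset ℕ, FarRep PM.1 PM.2 N := by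
      intro N hk hpos
      classical
      have hex : ∃ n : ℕ, N ≤ (S n : ℤ) := by
        refine ⟨N.toNat, ?_⟩
        have h1 : N.toNat ≤ S N.toNat := S_le_self _
        omega
      set n := Nat.find hex with hndef
      have hnle : N ≤ (S n : ℤ) := Nat.find_spec hex
      have hlt : (S (n-1) : ℤ) < N := by
        rcases Nat.eq_zero_or_pos n with h0 | h0
        · rw [h0]
          have : S (0 - 1) = 0 := S_zero
          omega
        · have hmin : ¬ (N ≤ (S (n-1) : ℤ)) := Nat.find_min hex (by omega)
          omega
      have hn1 : 1 ≤ n := by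
        by_contra h'
        have h0 : n = 0 := by omega
        rw [h0] at hnle
        have : S 0 = 0 := S_zero
        omega
      have hFeq : F n = S (n-1) + S (n-3) + 1 := F_eq n hn1
      have hSeq : S n = F n + S (n - 4) := S_eq n hn1
      set N' := N - (F n : ℤ) with hN'def
      have hlow : -(S (n-3) : ℤ) ≤ N' := by omega
      have hhigh : N' ≤ (S (n-4) : ℤ) := by omega
      have hmono1 : S (n-4) ≤ S (n-1) := S_mono (by omega)
      have hmono2 : S (n-3) ≤ S (n-1) := S_mono (by omega)
      have habs : N'.natAbs ≤ k := by omega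
      by_cases hz : N' = (0 : ℤ)
      · refine ⟨({n}, ∅), ?_, ?_⟩
        · refine ⟨?_, by simp, ?_, by simp, by simp, ?_⟩
          · intro i hi
            rw [Finset.mem_singleton] at hi
            omega
          · intro i hi j hj hij
            rw [Finset.mem_singleton] at hi hj
            exact absurd (hi.trans hj.symm) hij
          · simp only [Finset.sum_singleton, Finset.sum_empty]
            omega
        · rintro ⟨Q, R⟩ hQR
          obtain ⟨q, hqQ, _, _, _, ⟨hqlt, hqle⟩, hrepQ, _⟩ := lead hQR hpos
          have hq : q = n := interval_unique hqlt hqle hlt hnle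
          rw [hq] at hrepQ hqQ
          have hqQ' : n ∈ Q := hqQ
          have hrepQ' : FarRep (Q.erase n) R (N - (F n : ℤ)) := hrepQ
          have h0 : FarRep (Q.erase n) R 0 := by
            rwa [show N - ((F n : ℕ) : ℤ) = 0 by omega] at hrepQ'
          obtain ⟨he1, he2⟩ := farRep_zero h0
          have hQ : Q = {n} := by
            rw [← Finset.insert_erase hqQ', he1]
            rfl
          simp [Prod.ext_iff, hQ, he2]
      · obtain ⟨⟨P', M'⟩, hrep', huniq'⟩ := ih N' habs hz
        have hbounds : (∀ i ∈ P', i ≤ n - 4) ∧ (∀ j ∈ M', j ≤ n - 3) := by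
          rcases lt_or_gt_of_ne hz with hneg | hposN'
          · obtain ⟨m, hmM', hub', hPle, _, ⟨hlt', _⟩, _, _⟩ :=
              lead (farRep_swap hrep') (by omega)
            have hm3 : m ≤ n - 3 := by
              by_contra hc
              have : S (n-3) ≤ S (m-1) := S_mono (by omega)
              omega
            refine ⟨fun i hi => ?_, fun j hj => le_trans (hub' j (Finset.mem_union_left _ hj)) hm3⟩
            have := hPle i hi
            omega
          · obtain ⟨n', hn'P, hub', _, _, ⟨hlt', _⟩, _, _⟩ := lead hrep' hposN'
            have hn'4 : n' ≤ n - 4 := by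
              by_contra hc
              have : S (n-4) ≤ S (n'-1) := S_mono (by omega)
              omega
            exact ⟨fun i hi => le_trans (hub' i (Finset.mem_union_left _ hi)) hn'4,
              fun j hj => le_trans (hub' j (Finset.mem_union_right _ hj)) (by omega)⟩
        obtain ⟨hP'ub, hM'ub⟩ := hbounds
        have hnP' : n ∉ P' := fun hc => by have := hP'ub n hc; omega
        obtain ⟨g1, g2, g3, g4, g5, g6⟩ := hrep'
        refine ⟨(insert n P', M'), ?_, ?_⟩
        · refine ⟨?_, g2, ?_, g4, ?_, ?_⟩
          · intro i hi
            rcases Finset.mem_insert.mp hi with rfl | hi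
            · exact hn1
            · exact g1 i hi
          · intro i hi j hj hij
            rcases Finset.mem_insert.mp hi with hieq | hi' <;>
              rcases Finset.mem_insert.mp hj with hjeq | hj'
            · exact absurd (hieq.trans hjeq.symm) hij
            · have hb := hP'ub j hj'
              have hb1 := g1 j hj'
              have h4 : (4:ℤ) ≤ (i:ℤ) - j := by omega
              exact le_trans h4 (le_abs_self _)
            · have hb := hP'ub i hi'
              have hb1 := g1 i hi'
              rw [abs_sub_comm]
              have h4 : (4:ℤ) ≤ (j:ℤ) - i := by omega
              exact le_trans h4 (le_abs_self _)
            · exact g3 i hi' j hj' hij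
          · intro i hi j hj
            rcases Finset.mem_insert.mp hi with hieq | hi'
            · have hb := hM'ub j hj
              have hb1 := g2 j hj
              have h3' : (3:ℤ) ≤ (i:ℤ) - j := by omega
              exact le_trans h3' (le_abs_self _)
            · exact g5 i hi' j hj
          · rw [Finset.sum_insert hnP']
            have : N = (F n : ℤ) + N' := by omega
            rw [this, g6]
            ring
        · rintro ⟨Q, R⟩ hQR
          obtain ⟨q, hqQ, _, _, _, ⟨hqlt, hqle⟩, hrepQ, _⟩ := lead hQR hpos
          have hq : q = n := interval_unique hqlt hqle hlt hnle
          rw [hq] at hrepQ hqQ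
          have hqQ' : n ∈ Q := hqQ
          have hQR' : FarRep (Q.erase n) R N' := by
            have hrepQ' : FarRep (Q.erase n) R (N - (F n : ℤ)) := hrepQ
            rwa [← hN'def] at hrepQ'
          have heq := huniq' (Q.erase n, R) hQR'
          simp only [Prod.mk.injEq] at heq ⊢
          constructor
          · rw [← heq.1, Finset.insert_erase hqQ']
          · exact heq.2
    intro N hk hN
    rcases hN.lt_or_gt with hneg | hpos'
    · obtain ⟨⟨P, M⟩, hPM, huniq⟩ := pos (-N) (by omega) (by omega)
      refine ⟨(M, P), ?_, ?_⟩
      · have := farRep_swap hPM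
        simpa using this
      · rintro ⟨Q, R⟩ hQR
        have := huniq (R, Q) (farRep_swap hQR)
        simp only [Prod.mk.injEq] at this ⊢
        exact ⟨this.2, this.1⟩
    · exact pos N hk hpos'
end

section
/- Let p_{n,k} denote the number of integers in [F_n, F_{n+1}) whose Zeckendorf decomposition has exactly k summands. Then p_{n,k} satisfies the recurrence p_{n,k} = p_{n-1,k} + p_{n-2,k-1} for n ≥ 3, with p_{1,1} = p_{2,1} = 1 and p_{n,k} = 0 for k ≤ 0 or k > n. -/
/-- `p n k` is the number of integers in `[F n, F (n+1))` whose Zeckendorf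
decomposition has exactly `k` summands. -/
noncomputable def p (n k : ℕ) : ℕ :=
  {m : ℕ | F n ≤ m ∧ m < F (n + 1) ∧
    ∃ S : Finset ℕ, (∀ i ∈ S, 1 ≤ i) ∧ (∀ i ∈ S, i + 1 ∉ S) ∧
      m = ∑ i ∈ S, F i ∧ S.card = k}.ncard

/-- Zeckendorf-type representation predicate. -/
def Zk (k m : ℕ) : Prop :=
  ∃ S : Finset ℕ, (∀ i ∈ S, 1 ≤ i) ∧ (∀ i ∈ S, i + 1 ∉ S) ∧
      m = ∑ i ∈ S, F i ∧ S.card = k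

def A (n k : ℕ) : Set ℕ := {m : ℕ | F n ≤ m ∧ m < F (n + 1) ∧ Zk k m}

def B (n k : ℕ) : Set ℕ := {m : ℕ | m < F (n + 1) ∧ Zk k m}

lemma pA (n k : ℕ) : p n k = (A n k).ncard := rfl

lemma F_mono {a b : ℕ} (h : a ≤ b) : F a ≤ F b := Nat.fib_mono (by omega)

lemma F_pos (n : ℕ) : 0 < F n := Nat.fib_pos.mpr (by omega)

lemma F_add (n : ℕ) : F (n + 2) = F (n + 1) + F n := by
  show Nat.fib (n + 3) = Nat.fib (n + 2) + Nat.fib (n + 1)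
  rw [show n + 3 = (n + 1) + 2 by ring, Nat.fib_add_two]
  ring

/-- Elements of a representing set of `m < F (N+1)` are at most `N`. -/
lemma elem_le {m N : ℕ} {S : Finset ℕ} (hm : m < F (N + 1))
    (hsum : m = ∑ i ∈ S, F i) : ∀ i ∈ S, i ≤ N := by
  intro i hi
  by_contra h
  have h1 : F (N + 1) ≤ F i := F_mono (by omega)
  have h2 : F i ≤ ∑ j ∈ S, F j :=
    Finset.single_le_sum (fun j _ => Nat.zero_le _) hi
  omega

/-- Upper bound on sums of nonconsecutive Fibonacci numbers. -/
lemma sum_lt (N : ℕ) : ∀ S : Finset ℕ, (∀ i ∈ S, 1 ≤ i) → (∀ i ∈ S, i + 1 ∉ S) →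
    (∀ i ∈ S, i ≤ N) → ∑ i ∈ S, F i < F (N + 1) := by
  induction N using Nat.strong_induction_on with
  | _ N ih =>
    intro S h1 h2 hN
    match N with
    | 0 =>
      have : S = ∅ := by
        ext i
        simp only [Finset.notMem_empty, iff_false]
        intro hi
        have := h1 i hi; have := hN i hi; omega
      simp [this, F, Nat.fib_one]
    | 1 =>
      have hsub : S ⊆ {1} := by
        intro i hi
        have := h1 i hi; have := hN i hi
        simp only [Finset.mem_singleton]; omega
      calc ∑ i ∈ S, F i ≤ ∑ i ∈ ({1} : Finset ℕ), F i :=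
            Finset.sum_le_sum_of_subset hsub
        _ = F 1 := by simp
        _ < F 2 := by decide
    | (N + 2) =>
      by_cases h : N + 2 ∈ S
      · have hS' : ∀ i ∈ S.erase (N + 2), i ≤ N := by
          intro i hi
          have hiS := Finset.mem_of_mem_erase hi
          have hne := Finset.ne_of_mem_erase hi
          have hle := hN i hiS
          have : i ≠ N + 1 := by
            intro hh
            subst hh
            exact h2 _ hiS h
          omega
        have hlt : ∑ i ∈ S.erase (N + 2), F i < F (N + 1) :=
          ih N (by omega) _ (fun i hi => h1 i (Finset.mem_of_mem_erase hi))
            (fun i hi hmem => h2 i (Finset.mem_of_mem_erase hi)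
              (Finset.mem_of_mem_erase hmem)) hS'
        have heq : ∑ i ∈ S.erase (N + 2), F i + F (N + 2) = ∑ i ∈ S, F i :=
          Finset.sum_erase_add _ _ h
        have hFa : F (N + 2 + 1) = F (N + 2) + F (N + 1) := F_add (N + 1)
        omega
      · have hN' : ∀ i ∈ S, i ≤ N + 1 := by
          intro i hi
          have := hN i hi
          rcases Nat.lt_or_ge i (N + 2) with h' | h'
          · omega
          · exact absurd (show i = N + 2 by omega) (fun hh => h (hh ▸ hi))
        have := ih (N + 1) (by omega) S h1 h2 hN'
        have e1 : F (N + 1 + 1) = F (N + 2) := rfl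
        have hle : F (N + 2) ≤ F (N + 2 + 1) := F_mono (by omega)
        omega

/-- The key bijection: `A (n+2) (k+1)` is the translate of `B n k` by `F (n+2)`. -/
lemma A_eq_image (n k : ℕ) :
    A (n + 2) (k + 1) = (fun m => m + F (n + 2)) '' B n k := by
  ext m
  constructor
  · rintro ⟨hlo, hhi, S, h1, h2, hsum, hcard⟩
    have hle : ∀ i ∈ S, i ≤ n + 2 := elem_le hhi hsum
    have hmem : n + 2 ∈ S := by
      by_contra h
      have : ∀ i ∈ S, i ≤ n + 1 := by
        intro i hi
        have := hle i hi
        rcases Nat.lt_or_ge i (n + 2) with h' | h'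
        · omega
        · exact absurd (show i = n + 2 by omega) (fun hh => h (hh ▸ hi))
      have := sum_lt (n + 1) S h1 h2 this
      have e1 : F (n + 1 + 1) = F (n + 2) := rfl
      omega
    set S' := S.erase (n + 2) with hS'
    have hS'le : ∀ i ∈ S', i ≤ n := by
      intro i hi
      have hiS := Finset.mem_of_mem_erase hi
      have hne := Finset.ne_of_mem_erase hi
      have := hle i hiS
      have : i ≠ n + 1 := by
        intro hh
        subst hh
        exact h2 _ hiS hmem
      omega
    have heq : ∑ i ∈ S', F i + F (n + 2) = ∑ i ∈ S, F i :=
      Finset.sum_erase_add _ _ hmem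
    refine ⟨∑ i ∈ S', F i, ⟨?_, S', ?_, ?_, rfl, ?_⟩,
      show (∑ i ∈ S', F i) + F (n + 2) = m by omega⟩
    · exact sum_lt n S' (fun i hi => h1 i (Finset.mem_of_mem_erase hi))
        (fun i hi hmem' => h2 i (Finset.mem_of_mem_erase hi)
          (Finset.mem_of_mem_erase hmem')) hS'le
    · exact fun i hi => h1 i (Finset.mem_of_mem_erase hi)
    · intro i hi hmem'
      exact h2 i (Finset.mem_of_mem_erase hi) (Finset.mem_of_mem_erase hmem')
    · rw [hS', Finset.card_erase_of_mem hmem, hcard]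
      omega
  · rintro ⟨m', ⟨hlt, S', h1, h2, hsum, hcard⟩, rfl⟩
    have hle : ∀ i ∈ S', i ≤ n := elem_le hlt hsum
    have hnot : n + 2 ∉ S' := fun h => by have := hle _ h; omega
    dsimp only
    refine ⟨by omega, ?_, insert (n + 2) S', ?_, ?_, ?_, ?_⟩
    · have hFa : F (n + 2 + 1) = F (n + 2) + F (n + 1) := F_add (n + 1)
      omega
    · intro i hi
      rcases Finset.mem_insert.mp hi with h | h
      · omega
      · exact h1 i h
    · intro i hi hmem
      rcases Finset.mem_insert.mp hi with h | h
      · rcases Finset.mem_insert.mp hmem with h' | h'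
        · omega
        · have := hle _ h'; omega
      · rcases Finset.mem_insert.mp hmem with h' | h'
        · have := hle _ h; omega
        · exact h2 i h h'
    · rw [Finset.sum_insert hnot, hsum]; ring
    · rw [Finset.card_insert_of_notMem hnot, hcard]

lemma B_finite (n k : ℕ) : (B n k).Finite :=
  Set.Finite.subset (Set.finite_Iio (F (n + 1))) (fun m hm => hm.1)

lemma A_finite (n k : ℕ) : (A n k).Finite :=
  Set.Finite.subset (Set.finite_Iio (F (n + 1))) (fun m hm => hm.2.1)

/-- Splitting `B (N+1)` into `B N` and `A (N+1)`. -/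
lemma B_split (N k : ℕ) :
    (B (N + 1) k).ncard = (B N k).ncard + (A (N + 1) k).ncard := by
  have hunion : B (N + 1) k = B N k ∪ A (N + 1) k := by
    ext m
    simp only [B, A, Set.mem_setOf_eq, Set.mem_union]
    constructor
    · rintro ⟨hlt, hz⟩
      rcases Nat.lt_or_ge m (F (N + 1)) with h | h
      · exact Or.inl ⟨h, hz⟩
      · exact Or.inr ⟨h, hlt, hz⟩
    · rintro (⟨hlt, hz⟩ | ⟨_, hlt, hz⟩)
      · exact ⟨lt_of_lt_of_le hlt (F_mono (by omega)), hz⟩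
      · exact ⟨hlt, hz⟩
  have hdisj : Disjoint (B N k) (A (N + 1) k) := by
    rw [Set.disjoint_left]
    rintro m ⟨hlt, _⟩ ⟨hge, _⟩
    omega
  rw [hunion, Set.ncard_union_eq hdisj (B_finite N k) (A_finite (N + 1) k)]

lemma A_card (n k : ℕ) : (A (n + 2) (k + 1)).ncard = (B n k).ncard := by
  rw [A_eq_image, Set.ncard_image_of_injective _ (add_left_injective (F (n + 2)))]

/-- The counts `p n k` satisfy `p n k = p (n-1) k + p (n-2) (k-1)` for `n ≥ 3`,
with `p 1 1 = p 2 1 = 1` and `p n k = 0` for `k ≤ 0` or `k > n`. -/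
theorem p_recurrence :
    (∀ n k : ℕ, 3 ≤ n → p n k = p (n - 1) k + p (n - 2) (k - 1)) ∧
    p 1 1 = 1 ∧ p 2 1 = 1 ∧
    (∀ n k : ℕ, k = 0 ∨ n < k → p n k = 0) := by
  have hzero : ∀ n k : ℕ, k = 0 ∨ n < k → p n k = 0 := by
    intro n k hk
    rw [pA]
    have : A n k = ∅ := by
      ext m
      simp only [Set.mem_empty_iff_false, iff_false]
      rintro ⟨hlo, hhi, S, h1, h2, hsum, hcard⟩
      rcases hk with rfl | hk
      · have hS : S = ∅ := Finset.card_eq_zero.mp hcard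
        have := F_pos n
        simp [hS] at hsum
        omega
      · have hle : ∀ i ∈ S, i ≤ n := elem_le hhi hsum
        have hsub : S ⊆ Finset.Icc 1 n := by
          intro i hi
          exact Finset.mem_Icc.mpr ⟨h1 i hi, hle i hi⟩
        have := Finset.card_le_card hsub
        rw [hcard, Nat.card_Icc] at this
        omega
    rw [this, Set.ncard_empty]
  refine ⟨?_, ?_, ?_, hzero⟩
  · intro n k hn
    rcases Nat.eq_zero_or_pos k with rfl | hk
    · rw [hzero n 0 (Or.inl rfl), hzero (n - 1) 0 (Or.inl rfl),
        hzero (n - 2) 0 (Or.inl rfl)]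
    · obtain ⟨a, rfl⟩ : ∃ a, n = a + 3 := ⟨n - 3, by omega⟩
      obtain ⟨b, rfl⟩ : ∃ b, k = b + 1 := ⟨k - 1, by omega⟩
      show p (a + 3) (b + 1) = p (a + 2) (b + 1) + p (a + 1) b
      have h1 : p (a + 3) (b + 1) = (B (a + 1) b).ncard := by
        rw [pA, show a + 3 = (a + 1) + 2 by ring, A_card]
      have h2 : p (a + 2) (b + 1) = (B a b).ncard := by
        rw [pA, A_card]
      have h3 := B_split a b
      have h4 : p (a + 1) b = (A (a + 1) b).ncard := pA _ _
      omega
  · -- p 1 1 = 1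
    rw [pA]
    have : A 1 1 = {1} := by
      ext m
      simp only [A, Set.mem_setOf_eq, Set.mem_singleton_iff]
      constructor
      · rintro ⟨hlo, hhi, _⟩
        have e1 : F 1 = 1 := by decide
        have e2 : F (1 + 1) = 2 := by decide
        omega
      · rintro rfl
        refine ⟨by decide, by decide, {1}, ?_, ?_, ?_, rfl⟩
        · simp
        · simp
        · decide
    rw [this, Set.ncard_singleton]
  · -- p 2 1 = 1
    rw [pA]
    have : A 2 1 = {2} := by
      ext m
      simp only [A, Set.mem_setOf_eq, Set.mem_singleton_iff]
      constructor
      · rintro ⟨hlo, hhi, _⟩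
        have e1 : F 2 = 2 := by decide
        have e2 : F (2 + 1) = 3 := by decide
        omega
      · rintro rfl
        refine ⟨by decide, by decide, {2}, ?_, ?_, ?_, rfl⟩
        · simp
        · simp
        · decide
    rw [this, Set.ncard_singleton]
end
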